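/- Let γ, γ', C, η > 0 and ρ ∈ (0, γ) be given such that η ≤ (1/4)·min{1 − 2^{−γ}, 1 − 2^{−γ'}, 1 − 2^{ρ−γ}}. Then for every bounded sequence {x_k}_{k≥0} of nonnegative reals satisfying x_k ≤ C·2^{−γk} + η·∑_{l=0}^{k−1} 2^{−γ(k−l)} x_l + η·∑_{l=k}^{∞} 2^{−γ'|k−l|} x_l for all k, one has x_k ≤ (4C + ‖x‖_{ℓ∞})·2^{−ρk} for all k. -/
import Mathlib

private lemma hpow_aux (a : ℝ) (j : ℕ) : (2:ℝ) ^ (a * (j:ℝ)) = ((2:ℝ) ^ a) ^ j := by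
  rw [← Real.rpow_natCast ((2:ℝ) ^ a) j, ← Real.rpow_mul (by norm_num : (0:ℝ) ≤ 2)]

private lemma geom_tail_sum (r : ℝ) (hr0 : 0 ≤ r) (hr1 : r < 1) (k : ℕ) :
    ∑ l ∈ Finset.range k, r ^ (k - l) ≤ (1 - r)⁻¹ := by
  have h1 : ∑ l ∈ Finset.range k, r ^ (k - l) = ∑ l ∈ Finset.range k, r ^ (l + 1) := by
    rw [← Finset.sum_range_reflect (fun l => r ^ (l + 1)) k]
    exact Finset.sum_congr rfl fun l hl => by
      rw [Finset.mem_range] at hl; congr 1; omega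
  rw [h1]
  calc ∑ l ∈ Finset.range k, r ^ (l + 1)
      ≤ ∑ l ∈ Finset.range k, r ^ l :=
        Finset.sum_le_sum fun l _ => pow_le_pow_of_le_one hr0 hr1.le (Nat.le_succ l)
    _ ≤ ∑' l : ℕ, r ^ l := Summable.sum_le_tsum _ (fun l _ => pow_nonneg hr0 l)
          (summable_geometric_of_lt_one hr0 hr1)
    _ = (1 - r)⁻¹ := tsum_geometric_of_lt_one hr0 hr1

set_option maxHeartbeats 1000000 in
theorem stmt_0 (γ γ' C η ρ : ℝ) (hγ : 0 < γ) (hγ' : 0 < γ') (hC : 0 < C) (hη : 0 < η)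
    (hρ : ρ ∈ Set.Ioo 0 γ)
    (hηle : η ≤ (1/4) * min (1 - (2:ℝ) ^ (-γ)) (min (1 - (2:ℝ) ^ (-γ')) (1 - (2:ℝ) ^ (ρ - γ))))
    (x : ℕ → ℝ) (hx0 : ∀ k, 0 ≤ x k) (hbdd : BddAbove (Set.range x))
    (hrec : ∀ k : ℕ, x k ≤ C * (2:ℝ) ^ (-γ * (k:ℝ))
        + η * ∑ l ∈ Finset.range k, (2:ℝ) ^ (-γ * ((k:ℝ) - (l:ℝ))) * x l
        + η * ∑' j : ℕ, (2:ℝ) ^ (-γ' * (j:ℝ)) * x (k + j)) :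
    ∀ k : ℕ, x k ≤ (4 * C + ⨆ k, x k) * (2:ℝ) ^ (-ρ * (k:ℝ)) := by
  obtain ⟨hρ0, hργ⟩ := hρ
  set M := ⨆ k, x k with hMdef
  have hM : ∀ k, x k ≤ M := fun k => le_ciSup hbdd k
  have hM0 : 0 ≤ M := (hx0 0).trans (hM 0)
  -- abbreviations
  set r : ℝ := (2:ℝ) ^ (-γ) with hrdef
  set r' : ℝ := (2:ℝ) ^ (-γ') with hr'def
  set s : ℝ := (2:ℝ) ^ (ρ - γ) with hsdef
  set t : ℝ := (2:ℝ) ^ (-(γ' + ρ)) with htdef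
  have hr0 : 0 < r := Real.rpow_pos_of_pos two_pos _
  have hr'0 : 0 < r' := Real.rpow_pos_of_pos two_pos _
  have hs0 : 0 < s := Real.rpow_pos_of_pos two_pos _
  have ht0 : 0 < t := Real.rpow_pos_of_pos two_pos _
  have hr1 : r < 1 := Real.rpow_lt_one_of_one_lt_of_neg one_lt_two (by linarith)
  have hr'1 : r' < 1 := Real.rpow_lt_one_of_one_lt_of_neg one_lt_two (by linarith)
  have hs1 : s < 1 := Real.rpow_lt_one_of_one_lt_of_neg one_lt_two (by linarith)
  have ht1 : t < 1 := Real.rpow_lt_one_of_one_lt_of_neg one_lt_two (by linarith)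
  have htr' : t ≤ r' := by
    rw [htdef, hr'def]
    exact (Real.rpow_le_rpow_left_iff one_lt_two).mpr (by linarith)
  have hηr : η ≤ (1/4) * (1 - r) := hηle.trans (by
    have := min_le_left (1 - r) (min (1 - r') (1 - s)); nlinarith)
  have hηr' : η ≤ (1/4) * (1 - r') := hηle.trans (by
    have h := (min_le_right (1 - r) (min (1 - r') (1 - s))).trans (min_le_left _ _); nlinarith)
  have hηs : η ≤ (1/4) * (1 - s) := hηle.trans (by
    have h := (min_le_right (1 - r) (min (1 - r') (1 - s))).trans (min_le_right _ _); nlinarith)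
  have hq_r : η * (1 - r)⁻¹ ≤ 1/4 := by
    rw [mul_inv_le_iff₀ (by linarith)]; linarith
  have hq_r' : η * (1 - r')⁻¹ ≤ 1/4 := by
    rw [mul_inv_le_iff₀ (by linarith)]; linarith
  have hq_s : η * (1 - s)⁻¹ ≤ 1/4 := by
    rw [mul_inv_le_iff₀ (by linarith)]; linarith
  have hinv_t : (1 - t)⁻¹ ≤ (1 - r')⁻¹ :=
    inv_anti₀ (by linarith) (by linarith)
  have key : ∀ n k : ℕ, x k ≤ 2 * C * (2:ℝ) ^ (-ρ * (k:ℝ)) + M * (1/2:ℝ) ^ n := by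
    intro n
    induction n with
    | zero =>
      intro k
      have hPk : 0 < (2:ℝ) ^ (-ρ * (k:ℝ)) := Real.rpow_pos_of_pos two_pos _
      have := hM k
      simp only [pow_zero, mul_one]
      nlinarith
    | succ n ih =>
      intro k
      have hPk : 0 < (2:ℝ) ^ (-ρ * (k:ℝ)) := Real.rpow_pos_of_pos two_pos _
      have hMc0 : 0 ≤ M * (1/2:ℝ) ^ n := mul_nonneg hM0 (by positivity)
      -- finite sum bound
      have h1 : ∑ l ∈ Finset.range k, (2:ℝ) ^ (-γ * ((k:ℝ) - (l:ℝ))) * x l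
          ≤ 2 * C * (2:ℝ) ^ (-ρ * (k:ℝ)) * (1 - s)⁻¹ + M * (1/2:ℝ) ^ n * (1 - r)⁻¹ := by
        have hpt : ∀ l ∈ Finset.range k, (2:ℝ) ^ (-γ * ((k:ℝ) - (l:ℝ))) * x l
            ≤ 2 * C * (2:ℝ) ^ (-ρ * (k:ℝ)) * s ^ (k - l) + M * (1/2:ℝ) ^ n * r ^ (k - l) := by
          intro l hl
          rw [Finset.mem_range] at hl
          have hcast : (k:ℝ) - (l:ℝ) = ((k - l : ℕ) : ℝ) := by
            push_cast [hl.le]; ring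
          have e1 : (2:ℝ) ^ (-γ * ((k:ℝ) - (l:ℝ))) = r ^ (k - l) := by
            rw [hcast, hrdef, ← hpow_aux]
          have e2 : (2:ℝ) ^ (-γ * ((k:ℝ) - (l:ℝ))) * (2:ℝ) ^ (-ρ * (l:ℝ))
              = (2:ℝ) ^ (-ρ * (k:ℝ)) * s ^ (k - l) := by
            rw [hsdef, ← hpow_aux, ← Real.rpow_add two_pos, ← Real.rpow_add two_pos]
            congr 1
            push_cast [hl.le]
            ring
          have hx : x l ≤ 2 * C * (2:ℝ) ^ (-ρ * (l:ℝ)) + M * (1/2:ℝ) ^ n := ih l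
          have hP : (0:ℝ) < (2:ℝ) ^ (-γ * ((k:ℝ) - (l:ℝ))) := Real.rpow_pos_of_pos two_pos _
          calc (2:ℝ) ^ (-γ * ((k:ℝ) - (l:ℝ))) * x l
              ≤ (2:ℝ) ^ (-γ * ((k:ℝ) - (l:ℝ))) * (2 * C * (2:ℝ) ^ (-ρ * (l:ℝ)) + M * (1/2:ℝ) ^ n) :=
                mul_le_mul_of_nonneg_left hx hP.le
            _ = 2 * C * (2:ℝ) ^ (-ρ * (k:ℝ)) * s ^ (k - l) + M * (1/2:ℝ) ^ n * r ^ (k - l) := by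
                linear_combination 2 * C * e2 + M * (1/2:ℝ) ^ n * e1
        calc ∑ l ∈ Finset.range k, (2:ℝ) ^ (-γ * ((k:ℝ) - (l:ℝ))) * x l
            ≤ ∑ l ∈ Finset.range k, (2 * C * (2:ℝ) ^ (-ρ * (k:ℝ)) * s ^ (k - l)
                + M * (1/2:ℝ) ^ n * r ^ (k - l)) := Finset.sum_le_sum hpt
          _ = 2 * C * (2:ℝ) ^ (-ρ * (k:ℝ)) * ∑ l ∈ Finset.range k, s ^ (k - l)
                + M * (1/2:ℝ) ^ n * ∑ l ∈ Finset.range k, r ^ (k - l) := by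
              rw [Finset.sum_add_distrib, ← Finset.mul_sum, ← Finset.mul_sum]
          _ ≤ 2 * C * (2:ℝ) ^ (-ρ * (k:ℝ)) * (1 - s)⁻¹ + M * (1/2:ℝ) ^ n * (1 - r)⁻¹ :=
              add_le_add
                (mul_le_mul_of_nonneg_left (geom_tail_sum s hs0.le hs1 k) (by positivity))
                (mul_le_mul_of_nonneg_left (geom_tail_sum r hr0.le hr1 k) hMc0)
      -- tsum bound
      have h2 : ∑' j : ℕ, (2:ℝ) ^ (-γ' * (j:ℝ)) * x (k + j)
          ≤ 2 * C * (2:ℝ) ^ (-ρ * (k:ℝ)) * (1 - r')⁻¹ + M * (1/2:ℝ) ^ n * (1 - r')⁻¹ := by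
        have e4 : ∀ j : ℕ, (2:ℝ) ^ (-γ' * (j:ℝ)) = r' ^ j := fun j => by
          rw [hr'def, ← hpow_aux]
        have e3 : ∀ j : ℕ, (2:ℝ) ^ (-γ' * (j:ℝ)) * (2:ℝ) ^ (-ρ * ((k + j : ℕ):ℝ))
            = (2:ℝ) ^ (-ρ * (k:ℝ)) * t ^ j := fun j => by
          rw [htdef, ← hpow_aux, ← Real.rpow_add two_pos, ← Real.rpow_add two_pos]
          congr 1
          push_cast
          ring
        have hpt2 : ∀ j : ℕ, (2:ℝ) ^ (-γ' * (j:ℝ)) * x (k + j)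
            ≤ 2 * C * (2:ℝ) ^ (-ρ * (k:ℝ)) * t ^ j + M * (1/2:ℝ) ^ n * r' ^ j := by
          intro j
          have hx : x (k + j) ≤ 2 * C * (2:ℝ) ^ (-ρ * ((k + j : ℕ):ℝ)) + M * (1/2:ℝ) ^ n :=
            ih (k + j)
          have hP : (0:ℝ) < (2:ℝ) ^ (-γ' * (j:ℝ)) := Real.rpow_pos_of_pos two_pos _
          calc (2:ℝ) ^ (-γ' * (j:ℝ)) * x (k + j)
              ≤ (2:ℝ) ^ (-γ' * (j:ℝ)) * (2 * C * (2:ℝ) ^ (-ρ * ((k + j : ℕ):ℝ)) + M * (1/2:ℝ) ^ n) :=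
                mul_le_mul_of_nonneg_left hx hP.le
            _ = 2 * C * (2:ℝ) ^ (-ρ * (k:ℝ)) * t ^ j + M * (1/2:ℝ) ^ n * r' ^ j := by
                linear_combination 2 * C * e3 j + M * (1/2:ℝ) ^ n * e4 j
        have hg : Summable (fun j : ℕ => 2 * C * (2:ℝ) ^ (-ρ * (k:ℝ)) * t ^ j
            + M * (1/2:ℝ) ^ n * r' ^ j) :=
          ((summable_geometric_of_lt_one ht0.le ht1).mul_left _).add
            ((summable_geometric_of_lt_one hr'0.le hr'1).mul_left _)
        have hf : Summable (fun j : ℕ => (2:ℝ) ^ (-γ' * (j:ℝ)) * x (k + j)) := by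
          apply Summable.of_nonneg_of_le
            (fun j => mul_nonneg (Real.rpow_pos_of_pos two_pos _).le (hx0 _))
            (fun j => ?_) ((summable_geometric_of_lt_one hr'0.le hr'1).mul_left M)
          rw [e4 j, mul_comm M (r' ^ j)]
          exact mul_le_mul_of_nonneg_left (hM _) (pow_nonneg hr'0.le j)
        calc ∑' j : ℕ, (2:ℝ) ^ (-γ' * (j:ℝ)) * x (k + j)
            ≤ ∑' j : ℕ, (2 * C * (2:ℝ) ^ (-ρ * (k:ℝ)) * t ^ j + M * (1/2:ℝ) ^ n * r' ^ j) :=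
              Summable.tsum_le_tsum hpt2 hf hg
          _ = 2 * C * (2:ℝ) ^ (-ρ * (k:ℝ)) * (1 - t)⁻¹ + M * (1/2:ℝ) ^ n * (1 - r')⁻¹ := by
              rw [Summable.tsum_add ((summable_geometric_of_lt_one ht0.le ht1).mul_left _)
                  ((summable_geometric_of_lt_one hr'0.le hr'1).mul_left _),
                tsum_mul_left, tsum_mul_left,
                tsum_geometric_of_lt_one ht0.le ht1, tsum_geometric_of_lt_one hr'0.le hr'1]
          _ ≤ 2 * C * (2:ℝ) ^ (-ρ * (k:ℝ)) * (1 - r')⁻¹ + M * (1/2:ℝ) ^ n * (1 - r')⁻¹ :=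
              add_le_add (mul_le_mul_of_nonneg_left hinv_t (by positivity)) le_rfl
      -- first term bound
      have hexp : -γ * (k:ℝ) ≤ -ρ * (k:ℝ) := by
        have hk0 : (0:ℝ) ≤ (k:ℝ) := Nat.cast_nonneg k
        nlinarith
      have hCk : C * (2:ℝ) ^ (-γ * (k:ℝ)) ≤ C * (2:ℝ) ^ (-ρ * (k:ℝ)) :=
        mul_le_mul_of_nonneg_left (Real.rpow_le_rpow_of_exponent_le one_le_two hexp) hC.le
      have hr1' := hrec k
      have hs1' := mul_le_mul_of_nonneg_left h1 hη.le
      have hs2' := mul_le_mul_of_nonneg_left h2 hη.le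
      have hb1 : η * (2 * C * (2:ℝ) ^ (-ρ * (k:ℝ)) * (1 - s)⁻¹ + M * (1/2:ℝ) ^ n * (1 - r)⁻¹)
          ≤ 2 * C * (2:ℝ) ^ (-ρ * (k:ℝ)) * (1/4) + M * (1/2:ℝ) ^ n * (1/4) := by
        nlinarith [mul_le_mul_of_nonneg_left hq_s (by positivity : (0:ℝ) ≤ 2 * C * (2:ℝ) ^ (-ρ * (k:ℝ))),
          mul_le_mul_of_nonneg_left hq_r hMc0]
      have hb2 : η * (2 * C * (2:ℝ) ^ (-ρ * (k:ℝ)) * (1 - r')⁻¹ + M * (1/2:ℝ) ^ n * (1 - r')⁻¹)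
          ≤ 2 * C * (2:ℝ) ^ (-ρ * (k:ℝ)) * (1/4) + M * (1/2:ℝ) ^ n * (1/4) := by
        nlinarith [mul_le_mul_of_nonneg_left hq_r' (by positivity : (0:ℝ) ≤ 2 * C * (2:ℝ) ^ (-ρ * (k:ℝ))),
          mul_le_mul_of_nonneg_left hq_r' hMc0]
      have hpow2 : M * (1/2:ℝ) ^ (n + 1) = M * (1/2:ℝ) ^ n * (1/2) := by ring
      rw [hpow2]
      linarith
  intro k
  have hPk : 0 < (2:ℝ) ^ (-ρ * (k:ℝ)) := Real.rpow_pos_of_pos two_pos _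
  have hlim : Filter.Tendsto (fun n : ℕ => 2 * C * (2:ℝ) ^ (-ρ * (k:ℝ)) + M * (1/2:ℝ) ^ n)
      Filter.atTop (nhds (2 * C * (2:ℝ) ^ (-ρ * (k:ℝ)) + M * 0)) :=
    Filter.Tendsto.add tendsto_const_nhds
      ((tendsto_pow_atTop_nhds_zero_of_lt_one (by norm_num) (by norm_num)).const_mul M)
  have hx2 : x k ≤ 2 * C * (2:ℝ) ^ (-ρ * (k:ℝ)) + M * 0 :=
    ge_of_tendsto' hlim (fun n => key n k)
  rw [mul_zero, add_zero] at hx2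
  nlinarith
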